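/- Let M be a maximum matching of graph G and suppose edge e = (u,v) ∈ M is deleted. Then in G − e, with respect to the matching M − e, every augmenting path starts or ends at u or v, and augmenting at most one such path (starting from u and, if still free, from v) yields a maximum matching of G − e. -/

import Mathlib

open Finset

/-- `M` is a matching of `G`: every edge of `M` is an edge of `G` and no two
distinct edges of `M` share an endpoint. -/
def IsMatching {V : Type*} (G : SimpleGraph V) (M : Finset (Sym2 V)) : Prop :=
  (∀ e ∈ M, e ∈ G.edgeSet) ∧ ∀ e ∈ M, ∀ f ∈ M, e ≠ f → ∀ v : V, v ∈ e → v ∉ f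

/-- A vertex is free w.r.t. `M` if it lies on no edge of `M`. -/
def IsFree {V : Type*} (M : Finset (Sym2 V)) (v : V) : Prop := ∀ e ∈ M, v ∉ e

/-- `M` is a maximum-cardinality matching of `G`. -/
def IsMaximumMatching {V : Type*} (G : SimpleGraph V) (M : Finset (Sym2 V)) : Prop :=
  IsMatching G M ∧ ∀ M' : Finset (Sym2 V), IsMatching G M' → M'.card ≤ M.card

/-- `M` is a maximal matching of `G`: it is a matching and every edge of `G`
has at least one matched endpoint. -/
def IsMaximalMatching {V : Type*} (G : SimpleGraph V) (M : Finset (Sym2 V)) : Prop :=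
  IsMatching G M ∧ ∀ e ∈ G.edgeSet, ∃ v : V, v ∈ e ∧ ¬ IsFree M v

/-- `p` is an augmenting path w.r.t. `M`: a simple path of positive length
between two free vertices whose edges alternate, starting (and hence, since the
endpoints are free, also ending) with a non-matching edge. -/
def IsAugPath {V : Type*} (G : SimpleGraph V) (M : Finset (Sym2 V)) {a b : V}
    (p : G.Walk a b) : Prop :=
  p.IsPath ∧ 0 < p.length ∧ IsFree M a ∧ IsFree M b ∧
    ∀ (i : ℕ) (h : i < p.edges.length), p.edges.get ⟨i, h⟩ ∈ M ↔ Odd i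


namespace AugAux

open SimpleGraph Walk

variable {V : Type*} {H : SimpleGraph V} {a b : V} {N A B : Finset (Sym2 V)}

lemma edges_get' : ∀ {a b : V} (p : H.Walk a b) (i : ℕ) (h : i < p.edges.length),
    p.edges.get ⟨i, h⟩ = s(p.getVert i, p.getVert (i + 1))
  | _, _, Walk.nil, i, h => by simp at h
  | _, _, Walk.cons hadj q, 0, h => by simp
  | _, _, Walk.cons hadj q, (i+1), h => by
      simpa using edges_get' q i (by simpa using h)

lemma support_get' : ∀ {a b : V} (p : H.Walk a b) (i : ℕ) (h : i < p.support.length),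
    p.support.get ⟨i, h⟩ = p.getVert i
  | _, _, Walk.nil, 0, h => by simp
  | _, _, Walk.nil, (i+1), h => by simp at h
  | _, _, Walk.cons hadj q, 0, h => by simp
  | _, _, Walk.cons hadj q, (i+1), h => by
      simpa using support_get' q i (by simpa using h)

lemma getVert_inj {p : H.Walk a b} (hp : p.IsPath) {i j : ℕ}
    (hi : i ≤ p.length) (hj : j ≤ p.length) (h : p.getVert i = p.getVert j) : i = j := by
  have hlen : p.support.length = p.length + 1 := by simp [Walk.length_support]
  have hi' : i < p.support.length := by omega
  have hj' : j < p.support.length := by omega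
  have hgi := support_get' p i hi'
  have hgj := support_get' p j hj'
  have hh : p.support.get ⟨i, hi'⟩ = p.support.get ⟨j, hj'⟩ := by rw [hgi, hgj, h]
  simpa using Fin.val_eq_of_eq ((List.Nodup.get_inj_iff hp.support_nodup).mp hh)

lemma ends_ne {p : H.Walk a b} (hp : p.IsPath) (hl : 0 < p.length) : a ≠ b := by
  intro hab
  have h0 : p.getVert 0 = p.getVert p.length := by
    rw [Walk.getVert_zero, Walk.getVert_length]; exact hab
  have := getVert_inj hp (Nat.zero_le _) le_rfl h0
  omega

lemma aug_odd {p : H.Walk a b} (hp : IsAugPath H N p) : Odd p.length := by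
  obtain ⟨hpath, hlen, ha, hb, halt⟩ := hp
  have hle : p.edges.length = p.length := p.length_edges
  have h1 : p.length - 1 < p.edges.length := by omega
  have hlast := halt (p.length - 1) h1
  have hget := edges_get' p (p.length - 1) h1
  have heq : p.length - 1 + 1 = p.length := by omega
  rw [heq, Walk.getVert_length] at hget
  have hnot : p.edges.get ⟨p.length - 1, h1⟩ ∉ N := by
    intro hmem
    exact hb _ hmem (by rw [hget]; simp)
  have : ¬ Odd (p.length - 1) := fun h => hnot (hlast.mpr h)
  rw [Nat.odd_iff] at this ⊢
  omega

lemma aug_reverse {p : H.Walk a b} (hp : IsAugPath H N p) : IsAugPath H N p.reverse := by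
  obtain ⟨hpath, hlen, ha, hb, halt⟩ := hp
  have hodd := aug_odd ⟨hpath, hlen, ha, hb, halt⟩
  have hle : p.edges.length = p.length := p.length_edges
  refine ⟨hpath.reverse, by simpa using hlen, hb, ha, ?_⟩
  intro i h
  have h' : i < p.edges.length := by simpa using h
  have hrev : p.reverse.edges = p.edges.reverse := p.edges_reverse
  have hget : p.reverse.edges.get ⟨i, h⟩ = p.edges.get
      ⟨p.edges.length - 1 - i, by omega⟩ := by
    simp only [List.get_eq_getElem]
    rw [List.getElem_of_eq hrev (by simpa using h)]
    rw [List.getElem_reverse]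
  rw [hget, halt (p.edges.length - 1 - i) (by omega)]
  obtain ⟨m, hm⟩ := hodd
  rw [Nat.odd_iff, Nat.odd_iff]
  omega

lemma alt_count [DecidableEq V] : ∀ (l : List (Sym2 V)) (c : ℕ),
    (∀ (i : ℕ) (h : i < l.length), l.get ⟨i, h⟩ ∈ N ↔ Odd (i + c)) →
    (l.filter (· ∈ N)).length = (l.length + c % 2) / 2
  | [], c, _ => by simp
  | x :: t, c, h => by
    have ht := alt_count t (c + 1) (fun i hi => by
      have := h (i + 1) (by simpa using Nat.succ_lt_succ hi)
      simpa [Nat.add_assoc, Nat.add_comm 1 c] using this)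
    have hx := h 0 (by simp)
    simp only [List.get] at hx
    by_cases hxN : x ∈ N
    · have hc : Odd c := by simpa [hxN] using hx
      rw [Nat.odd_iff] at hc
      rw [List.filter_cons_of_pos (by simpa using hxN)]
      simp only [List.length_cons, ht]
      omega
    · have hc : ¬ Odd c := fun hh => hxN (hx.mpr (by simpa using hh))
      rw [Nat.odd_iff] at hc
      rw [List.filter_cons_of_neg (by simpa using hxN)]
      simp only [List.length_cons, ht]
      omega

lemma matched_eq (hN : IsMatching H N) {e f : Sym2 V} (he : e ∈ N) (hf : f ∈ N)
    {t : V} (hte : t ∈ e) (htf : t ∈ f) : e = f := by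
  by_contra h; exact hN.2 e he f hf h t hte htf

lemma share {p : H.Walk a b} (hp : p.IsPath) {i j : ℕ} (hij : i < j)
    (hi : i < p.edges.length) (hj : j < p.edges.length) {t : V}
    (hti : t ∈ p.edges.get ⟨i, hi⟩) (htj : t ∈ p.edges.get ⟨j, hj⟩) : j = i + 1 ∧ t = p.getVert j := by
  have hle : p.edges.length = p.length := p.length_edges
  rw [edges_get' p i hi, Sym2.mem_iff] at hti
  rw [edges_get' p j hj, Sym2.mem_iff] at htj
  rcases hti with h1 | h1 <;> rcases htj with h2 | h2
  · exact absurd (getVert_inj hp (by omega) (by omega) (h1.symm.trans h2)) (by omega)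
  · exact absurd (getVert_inj hp (by omega) (by omega) (h1.symm.trans h2)) (by omega)
  · have h3 := getVert_inj hp (by omega) (by omega) (h1.symm.trans h2)
    exact ⟨by omega, h2⟩
  · exact absurd (getVert_inj hp (by omega) (by omega) (h1.symm.trans h2)) (by omega)

lemma augment [DecidableEq V] (hN : IsMatching H N) {p : H.Walk a b} (hp : IsAugPath H N p) :
    IsMatching H (symmDiff N p.edges.toFinset) ∧
      (symmDiff N p.edges.toFinset).card = N.card + 1 := by
  obtain ⟨hpath, hlen, hfa, hfb, halt⟩ := hp
  have hodd := aug_odd ⟨hpath, hlen, hfa, hfb, halt⟩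
  obtain ⟨m, hm⟩ := hodd
  have hle : p.edges.length = p.length := p.length_edges
  have hnodup : p.edges.Nodup := hpath.isTrail.edges_nodup
  set P := p.edges.toFinset with hP
  -- membership in P
  have hmemP : ∀ {e : Sym2 V}, e ∈ P ↔ e ∈ p.edges := fun {e} => List.mem_toFinset
  constructor
  · constructor
    · intro e he
      rw [Finset.mem_symmDiff] at he
      rcases he with ⟨he, -⟩ | ⟨he, -⟩
      · exact hN.1 e he
      · exact p.edges_subset_edgeSet (hmemP.mp he)
    · -- disjointness
      intro e he f hf hef t hte htf
      rw [Finset.mem_symmDiff] at he hf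
      -- helper for mixed case
      have key : ∀ e f : Sym2 V, e ∈ N → e ∉ P → f ∈ P → f ∉ N → t ∈ e → t ∈ f → False := by
        intro e f heN heP hfP hfN hte htf
        obtain ⟨⟨i, hi⟩, hig⟩ := List.mem_iff_get.mp (hmemP.mp hfP)
        have hnoti : ¬ Odd i := fun hh => hfN (by rw [← hig]; exact (halt i hi).mpr hh)
        rw [← hig, edges_get' p i hi, Sym2.mem_iff] at htf
        rcases htf with h1 | h1
        · -- t = getVert i
          rcases Nat.eq_zero_or_pos i with h0 | h0
          · subst h0; rw [Walk.getVert_zero] at h1; subst h1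
            exact hfa e heN hte
          · have hi1 : i - 1 < p.edges.length := by omega
            have hodd1 : Odd (i - 1) := by rw [Nat.odd_iff] at hnoti ⊢; omega
            have hmem1 : p.edges.get ⟨i - 1, hi1⟩ ∈ N := (halt _ hi1).mpr hodd1
            have htm : t ∈ p.edges.get ⟨i - 1, hi1⟩ := by
              rw [edges_get' p (i-1) hi1, h1]
              have : i - 1 + 1 = i := by omega
              rw [this]; simp
            have := matched_eq hN heN hmem1 hte htm
            exact heP (by rw [this]; exact hmemP.mpr (List.get_mem _ _))
        · -- t = getVert (i+1)
          rcases Nat.lt_or_ge (i + 1) p.edges.length with h2 | h2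
          · have hodd1 : Odd (i + 1) := by rw [Nat.odd_iff] at hnoti ⊢; omega
            have hmem1 : p.edges.get ⟨i + 1, h2⟩ ∈ N := (halt _ h2).mpr hodd1
            have htm : t ∈ p.edges.get ⟨i + 1, h2⟩ := by
              rw [edges_get' p (i+1) h2, h1]; simp
            have := matched_eq hN heN hmem1 hte htm
            exact heP (by rw [this]; exact hmemP.mpr (List.get_mem _ _))
          · have : i + 1 = p.length := by omega
            rw [this, Walk.getVert_length] at h1; subst h1
            exact hfb e heN hte
      rcases he with ⟨heN, heP⟩ | ⟨heP, heN⟩ <;> rcases hf with ⟨hfN, hfP⟩ | ⟨hfP, hfN⟩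
      · exact hN.2 e heN f hfN hef t hte htf
      · exact key e f heN heP hfP hfN hte htf
      · exact key f e hfN hfP heP heN htf hte
      · -- both path edges, not in N
        obtain ⟨⟨i, hi⟩, hig⟩ := List.mem_iff_get.mp (hmemP.mp heP)
        obtain ⟨⟨j, hj⟩, hjg⟩ := List.mem_iff_get.mp (hmemP.mp hfP)
        have hij : i ≠ j := by
          intro h; apply hef; rw [← hig, ← hjg]; congr 1; exact Fin.ext h
        have hinot : ¬ Odd i := fun hh => heN (by rw [← hig]; exact (halt i hi).mpr hh)
        have hjnot : ¬ Odd j := fun hh => hfN (by rw [← hjg]; exact (halt j hj).mpr hh)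
        rw [Nat.odd_iff] at hinot hjnot
        rcases Nat.lt_or_ge i j with hlt | hge
        · have := (share hpath hlt hi hj (by rw [hig]; exact hte) (by rw [hjg]; exact htf)).1
          omega
        · have hlt : j < i := by omega
          have := (share hpath hlt hj hi (by rw [hjg]; exact htf) (by rw [hig]; exact hte)).1
          omega
  · -- cardinality
    have hPcard : P.card = p.length := by
      rw [hP, List.toFinset_card_of_nodup hnodup, hle]
    have hconv : (P.filter (· ∈ N)).card = (p.edges.filter (· ∈ N)).length := by
      rw [← List.toFinset_card_of_nodup (hnodup.filter _)]
      congr 1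
      ext g
      simp [hP, List.mem_filter]
    have hcount := alt_count (N := N) p.edges 0 (fun i h => by simpa using halt i h)
    have hPN : (P ∩ N).card = m := by
      rw [← Finset.filter_mem_eq_inter, hconv, hcount, hle, hm]
      omega
    have h1 : (N \ P).card + (N ∩ P).card = N.card := Finset.card_sdiff_add_card_inter N P
    have h2 : (P \ N).card + (P ∩ N).card = P.card := Finset.card_sdiff_add_card_inter P N
    have h3 : (N ∩ P).card = (P ∩ N).card := by rw [Finset.inter_comm]
    have h4 : (symmDiff N P).card = (N \ P).card + (P \ N).card := by
      rw [symmDiff_def, sup_eq_union, Finset.card_union_of_disjoint disjoint_sdiff_sdiff]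
    omega


def cut (H : SimpleGraph V) (s : Set V) : SimpleGraph V where
  Adj x y := H.Adj x y ∧ x ∉ s ∧ y ∉ s
  symm := ⟨fun x y (h : H.Adj x y ∧ x ∉ s ∧ y ∉ s) => ⟨h.1.symm, h.2.2, h.2.1⟩⟩
  loopless := ⟨fun x (h : H.Adj x x ∧ x ∉ s ∧ x ∉ s) => H.loopless.irrefl x h.1⟩

lemma cut_le {s : Set V} : cut H s ≤ H := fun x y (h : H.Adj x y ∧ x ∉ s ∧ y ∉ s) => h.1

lemma mem_edgeSet_cut {s : Set V} {e : Sym2 V} :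
    e ∈ (cut H s).edgeSet ↔ e ∈ H.edgeSet ∧ ∀ x ∈ e, x ∉ s := by
  induction e using Sym2.ind with
  | _ x y =>
    simp only [SimpleGraph.mem_edgeSet, Sym2.mem_iff]
    constructor
    · rintro ⟨h, hx, hy⟩
      exact ⟨h, fun z hz => by rcases hz with rfl | rfl <;> assumption⟩
    · rintro ⟨h, hall⟩
      exact ⟨h, hall x (Or.inl rfl), hall y (Or.inr rfl)⟩

lemma matching_cut {s : Set V} (hA : IsMatching H A) {A' : Finset (Sym2 V)}
    (hsub : A' ⊆ A) (havoid : ∀ g ∈ A', ∀ x ∈ g, x ∉ s) : IsMatching (cut H s) A' :=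
  ⟨fun e he => mem_edgeSet_cut.mpr ⟨hA.1 e (hsub he), havoid e he⟩,
   fun e he f hf hef t hte => hA.2 e (hsub he) f (hsub hf) hef t hte⟩

def s2f [DecidableEq V] : Sym2 V → Finset V :=
  Sym2.lift ⟨fun x y => {x, y}, fun x y => by simp [Finset.pair_comm]⟩

@[simp] lemma mem_s2f [DecidableEq V] {x : V} {e : Sym2 V} : x ∈ s2f e ↔ x ∈ e := by
  induction e using Sym2.ind with
  | _ y z => simp [s2f, Sym2.mem_iff]

lemma exists_free_covered [DecidableEq V] (hA : IsMatching H A) (hB : IsMatching H B)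
    (hlt : A.card < B.card) : ∃ x : V, (∃ f ∈ B, x ∈ f) ∧ IsFree A x := by
  by_contra hc
  push_neg at hc
  simp only [IsFree, not_forall] at hc
  have hcov : ∀ x : V, (∃ f ∈ B, x ∈ f) → ∃ g ∈ A, x ∈ g ∧ True := by
    intro x hx
    obtain ⟨g, hg, hxg⟩ := hc x hx
    push_neg at hxg
    exact ⟨g, hg, by simpa using hxg, trivial⟩
  -- cardinality of covered sets
  have hcard : ∀ (X : Finset (Sym2 V)), IsMatching H X →
      (X.biUnion s2f).card = 2 * X.card := by
    intro X hX
    rw [Finset.card_biUnion]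
    · rw [Finset.sum_congr rfl (fun e he => ?_), Finset.sum_const, smul_eq_mul, mul_comm]
      have hne : ¬ e.IsDiag := by
        have := hX.1 e he
        exact (SimpleGraph.not_isDiag_of_mem_edgeSet H this)
      induction e using Sym2.ind with
      | _ x y =>
        have hxy : x ≠ y := by simpa [Sym2.isDiag_iff_proj_eq] using hne
        show (s2f s(x, y)).card = 2
        simp only [s2f, Sym2.lift_mk]
        exact Finset.card_pair hxy
    · intro e he f hf hef
      rw [Function.onFun, Finset.disjoint_left]
      intro x hx hx'
      exact hX.2 e he f hf hef x (mem_s2f.mp hx) (mem_s2f.mp hx')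
  have hsub : B.biUnion s2f ⊆ A.biUnion s2f := by
    intro x hx
    rw [Finset.mem_biUnion] at hx ⊢
    obtain ⟨f, hf, hxf⟩ := hx
    obtain ⟨g, hg, hxg, -⟩ := hcov x ⟨f, hf, mem_s2f.mp hxf⟩
    exact ⟨g, hg, mem_s2f.mpr hxg⟩
  have := Finset.card_le_card hsub
  rw [hcard A hA, hcard B hB] at this
  omega


lemma support_mem_edges : ∀ {a b : V} (p : H.Walk a b), 0 < p.length →
    ∀ x ∈ p.support, ∃ e ∈ p.edges, x ∈ e
  | _, _, Walk.nil, hl, _, _ => by simp at hl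
  | a, b, Walk.cons (v := c) hadj q, _, x, hx => by
    rw [Walk.support_cons] at hx
    rcases List.mem_cons.mp hx with rfl | hx
    · exact ⟨s(x, c), by simp, by simp⟩
    · rw [Walk.support_eq_cons q] at hx
      rcases List.mem_cons.mp hx with rfl | hx
      · exact ⟨s(a, x), by simp, by simp⟩
      · have hql : 0 < q.length := by
          by_contra h
          have h0 : q.length = 0 := by omega
          have h1 : q.support.length = 1 := by rw [Walk.length_support, h0]
          have h2 : q.support.tail.length = 0 := by rw [List.length_tail, h1]
          rw [List.eq_nil_of_length_eq_zero h2] at hx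
          simp at hx
        obtain ⟨e, he, hxe⟩ := support_mem_edges q hql x
          (Walk.support_eq_cons q ▸ List.mem_cons_of_mem _ hx)
        exact ⟨e, by simp [he], hxe⟩


lemma berge [DecidableEq V] : ∀ (n : ℕ) (H : SimpleGraph V) (A B : Finset (Sym2 V)),
    A.card < n → IsMatching H A → IsMatching H B → A.card < B.card →
    ∃ (x y : V) (p : H.Walk x y), IsAugPath H A p := by
  intro n
  induction n with
  | zero => intro H A B h; omega
  | succ n ih =>
    intro H A B hAn hA hB hlt
    obtain ⟨a₀, ⟨f, hfB, ha₀f⟩, hfree⟩ := exists_free_covered hA hB hlt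
    obtain ⟨w, rfl⟩ := Sym2.mem_iff_exists.mp ha₀f
    have hadj : H.Adj a₀ w := (mem_edgeSet H).mp (hB.1 _ hfB)
    have hne : a₀ ≠ w := hadj.ne
    by_cases hw : IsFree A w
    · refine ⟨a₀, w, Walk.cons hadj Walk.nil, ?_, by simp, hfree, hw, ?_⟩
      · rw [Walk.isPath_def]; simp [hne]
      · intro i h
        simp only [Walk.edges_cons, Walk.edges_nil, List.length_cons, List.length_nil] at h
        interval_cases i
        simp only [Walk.edges_cons, Walk.edges_nil, List.get]
        constructor
        · intro hmem; exact absurd (hfree _ hmem) (by simp)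
        · intro hodd; exact absurd hodd (by simp [Nat.odd_iff])
    · simp only [IsFree, not_forall] at hw
      obtain ⟨e, heA, hwe'⟩ := hw
      have hwe : w ∈ e := not_not.mp hwe'
      obtain ⟨z, rfl⟩ := Sym2.mem_iff_exists.mp hwe
      have hadj₂ : H.Adj w z := (mem_edgeSet H).mp (hA.1 _ heA)
      have hwz : w ≠ z := hadj₂.ne
      have ha₀e : a₀ ∉ s(w, z) := hfree _ heA
      have ha₀w : a₀ ∉ ({w} : Set V) := by simp [hne]
      set s : Set V := {a₀, w} with hs
      have hws : w ∈ s := by simp [hs]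
      have ha₀s : a₀ ∈ s := by simp [hs]
      -- the smaller matchings
      set A'' := A.erase s(w, z) with hA''def
      set B'' := B.erase s(a₀, w) with hB''def
      have hA'' : IsMatching (cut H s) A'' := by
        apply matching_cut hA (Finset.erase_subset _ _)
        intro g hg x hxg hxs
        have hgA : g ∈ A := Finset.mem_of_mem_erase hg
        have hgne : g ≠ s(w, z) := Finset.ne_of_mem_erase hg
        rcases hxs with rfl | rfl
        · exact hfree g hgA hxg
        · exact hA.2 g hgA _ heA hgne x hxg hwe
      have hB'' : IsMatching (cut H s) B'' := by
        apply matching_cut hB (Finset.erase_subset _ _)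
        intro g hg x hxg hxs
        have hgB : g ∈ B := Finset.mem_of_mem_erase hg
        have hgne : g ≠ s(a₀, w) := Finset.ne_of_mem_erase hg
        rcases hxs with rfl | rfl
        · exact hB.2 g hgB _ hfB hgne x hxg (by simp)
        · exact hB.2 g hgB _ hfB hgne x hxg (by simp)
      have hcardA : A''.card = A.card - 1 := Finset.card_erase_of_mem heA
      have hcardB : B''.card = B.card - 1 := Finset.card_erase_of_mem hfB
      have hApos : 1 ≤ A.card := Finset.card_pos.mpr ⟨_, heA⟩
      obtain ⟨x, y, p, hp⟩ := ih (cut H s) A'' B'' (by omega) hA'' hB'' (by omega)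
      -- key construction
      have main : ∀ (x y : V) (p : (cut H s).Walk x y), IsAugPath (cut H s) A'' p →
          x ≠ z → ∃ (u' v' : V) (q : H.Walk u' v'), IsAugPath H A q := by
        intro x y p hp hxz
        have hav : ∀ t ∈ p.support, t ∉ s := by
          intro t ht
          obtain ⟨g, hg, htg⟩ := support_mem_edges p hp.2.1 t ht
          exact (mem_edgeSet_cut.mp (p.edges_subset_edgeSet hg)).2 t htg
        have hsubE : ∀ g ∈ p.edges, g ∈ H.edgeSet := fun g hg =>
          (mem_edgeSet_cut.mp (p.edges_subset_edgeSet hg)).1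
        have hEavoid : ∀ g ∈ p.edges, ∀ t ∈ g, t ∉ s := fun g hg =>
          (mem_edgeSet_cut.mp (p.edges_subset_edgeSet hg)).2
        have hgne : ∀ g ∈ p.edges, g ≠ s(w, z) := by
          intro g hg hge
          exact hEavoid g hg w (hge ▸ (by simp : w ∈ s(w,z))) hws
        have htrans : ∀ g ∈ p.edges, (g ∈ A ↔ g ∈ A'') := by
          intro g hg
          rw [hA''def, Finset.mem_erase]
          exact ⟨fun h => ⟨hgne g hg, h⟩, fun h => h.2⟩
        have hfreeA : ∀ t, t ∈ p.support → t ≠ z → IsFree A'' t → IsFree A t := by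
          intro t ht htz hfr g hgA htg
          by_cases hgeq : g = s(w, z)
          · subst hgeq
            rcases Sym2.mem_iff.mp htg with rfl | rfl
            · exact hav t ht hws
            · exact htz rfl
          · exact hfr g (Finset.mem_erase.mpr ⟨hgeq, hgA⟩) htg
        set pt := p.transfer H hsubE with hpt
        have hptE : pt.edges = p.edges := p.edges_transfer hsubE
        have hptS : pt.support = p.support := p.support_transfer hsubE
        have hptL : pt.length = p.length := p.length_transfer hsubE
        have hptP : pt.IsPath := hp.1.transfer hsubE
        by_cases hyz : y = z
        · -- extend the path
          subst hyz
          have hadjzw : H.Adj y w := hadj₂.symm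
          have hadjwa : H.Adj w a₀ := hadj.symm
          let ext : H.Walk y a₀ := Walk.cons hadjzw (Walk.cons hadjwa Walk.nil)
          refine ⟨x, a₀, pt.append ext, ?_, ?_, ?_, hfree, ?_⟩
          · rw [Walk.isPath_def, Walk.support_append]
            have hext : ext.support.tail = [w, a₀] := by simp [ext]
            rw [hext, List.nodup_append]
            refine ⟨hptS ▸ hp.1.support_nodup, by simp [hne.symm], ?_⟩
            intro t ht t' ht2 htt; subst htt
            rw [hptS] at ht
            rcases (by simpa using ht2 : t = w ∨ t = a₀) with rfl | rfl
            · exact hav t ht hws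
            · exact hav t ht ha₀s
          · rw [Walk.length_append]
            have h2 : ext.length = 2 := rfl
            omega
          · -- x free
            exact hfreeA x (hptS ▸ pt.start_mem_support) hxz hp.2.2.1
          · -- alternation
            have hedges : (pt.append ext).edges = p.edges ++ [s(y, w), s(w, a₀)] := by
              rw [Walk.edges_append, hptE]
              congr 1
            have hL : p.edges.length = p.length := p.length_edges
            have hodd := aug_odd hp
            obtain ⟨m, hm⟩ := hodd
            intro i h
            have hlen2 : (pt.append ext).edges.length = p.length + 2 := by
              rw [hedges]; simp [hL]
            have hgetq : (pt.append ext).edges.get ⟨i, h⟩ =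
                (p.edges ++ [s(y, w), s(w, a₀)]).get ⟨i, by
                  rw [← hedges]; exact h⟩ := by
              simp only [List.get_eq_getElem]
              exact List.getElem_of_eq hedges _
            rw [hgetq]
            rcases Nat.lt_trichotomy i p.length with hi | hi | hi
            · have hi' : i < p.edges.length := by omega
              have : (p.edges ++ [s(y, w), s(w, a₀)]).get ⟨i, by simp; omega⟩ =
                  p.edges.get ⟨i, hi'⟩ := by
                simp only [List.get_eq_getElem]
                exact List.getElem_append_left hi'
              rw [this, htrans _ (List.get_mem _ _)]
              exact hp.2.2.2.2 i hi'
            · -- i = p.length : matched edge e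
              have : (p.edges ++ [s(y, w), s(w, a₀)]).get ⟨i, by simp; omega⟩ =
                  s(y, w) := by
                simp only [List.get_eq_getElem]
                rw [List.getElem_append_right (by omega)]
                simp [hL, hi]
              rw [this]
              have hyweq : s(y, w) = s(w, y) := Sym2.eq_swap
              constructor
              · intro _; rw [hi] at *; exact ⟨m, hm⟩
              · intro _; rw [hyweq]; exact heA
            · -- i = p.length + 1 : edge f, unmatched
              have hieq : i = p.length + 1 := by
                have := h; rw [hlen2] at this; omega
              have : (p.edges ++ [s(y, w), s(w, a₀)]).get ⟨i, by simp; omega⟩ =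
                  s(w, a₀) := by
                simp only [List.get_eq_getElem]
                rw [List.getElem_append_right (by omega)]
                simp [hL, hieq]
              rw [this]
              constructor
              · intro hmem; exact absurd (hfree _ hmem) (by simp)
              · intro hoddi
                rw [Nat.odd_iff] at hoddi
                omega
        · -- just transfer
          refine ⟨x, y, pt, hptP, by rw [hptL]; exact hp.2.1, ?_, ?_, ?_⟩
          · exact hfreeA x (hptS ▸ pt.start_mem_support) hxz hp.2.2.1
          · exact hfreeA y (hptS ▸ pt.end_mem_support) hyz hp.2.2.2.1
          · intro i h
            have h' : i < p.edges.length := by rw [← hptE]; exact h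
            have : pt.edges.get ⟨i, h⟩ = p.edges.get ⟨i, h'⟩ := by
              simp only [List.get_eq_getElem]
              exact List.getElem_of_eq hptE _
            rw [this, htrans _ (List.get_mem _ _)]
            exact hp.2.2.2.2 i h'
      by_cases hx : x = z
      · subst hx
        have hxy : x ≠ y := ends_ne hp.1 hp.2.1
        exact main y x p.reverse (aug_reverse hp) (fun h => hxy h.symm)
      · exact main x y p hp hx


end AugAux

/-- Edge deletion from a maximum matching: after deleting the matched edge
`(u,v)`, every augmenting path w.r.t. `M - e` in `G - e` starts or ends at
`u` or `v`; if there is no augmenting path then `M - e` is already maximum,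
and augmenting along any augmenting path yields a maximum matching of `G - e`. -/
theorem delete_matched_edge_aug_path {V : Type*} [DecidableEq V]
    (G : SimpleGraph V) (M : Finset (Sym2 V)) (u v : V)
    (hM : IsMaximumMatching G M) (he : s(u, v) ∈ M)
    (G' : SimpleGraph V) (hG' : G' = G.deleteEdges {s(u, v)})
    (M' : Finset (Sym2 V)) (hM' : M' = M.erase s(u, v)) :
    (∀ (a b : V) (p : G'.Walk a b), IsAugPath G' M' p →
        a = u ∨ a = v ∨ b = u ∨ b = v) ∧
    ((¬ ∃ (a b : V) (p : G'.Walk a b), IsAugPath G' M' p) →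
        IsMaximumMatching G' M') ∧
    (∀ (a b : V) (p : G'.Walk a b), IsAugPath G' M' p →
        IsMaximumMatching G' (symmDiff M' p.edges.toFinset)) := by
  subst hG' hM'
  have hES : (G.deleteEdges {s(u, v)}).edgeSet = G.edgeSet \ {s(u, v)} :=
    SimpleGraph.edgeSet_deleteEdges _
  have hMM := hM.1
  have hM'match : IsMatching (G.deleteEdges {s(u, v)}) (M.erase s(u, v)) := by
    constructor
    · intro g hg
      rw [hES]
      refine ⟨hMM.1 g (Finset.mem_of_mem_erase hg), ?_⟩
      simpa using Finset.ne_of_mem_erase hg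
    · intro e he f hf hef t hte
      exact hMM.2 e (Finset.mem_of_mem_erase he) f (Finset.mem_of_mem_erase hf) hef t hte
  have hMcard : 1 ≤ M.card := Finset.card_pos.mpr ⟨_, he⟩
  have hMcard' : (M.erase s(u, v)).card = M.card - 1 := Finset.card_erase_of_mem he
  have hnoG : ∀ (a b : V) (q : G.Walk a b), ¬ IsAugPath G M q := by
    intro a b q hq
    obtain ⟨hmatch, hcard⟩ := AugAux.augment hMM hq
    have := hM.2 _ hmatch
    omega
  have part1 : ∀ (a b : V) (p : (G.deleteEdges {s(u, v)}).Walk a b),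
      IsAugPath (G.deleteEdges {s(u, v)}) (M.erase s(u, v)) p →
      a = u ∨ a = v ∨ b = u ∨ b = v := by
    intro a b p hp
    by_contra hcon
    push_neg at hcon
    obtain ⟨hau, hav, hbu, hbv⟩ := hcon
    have hmemE : ∀ g ∈ p.edges, g ∈ G.edgeSet ∧ g ≠ s(u, v) := by
      intro g hg
      have := p.edges_subset_edgeSet hg
      rw [hES] at this
      exact ⟨this.1, by simpa using this.2⟩
    have hsubE : ∀ g ∈ p.edges, g ∈ G.edgeSet := fun g hg => (hmemE g hg).1
    set q := p.transfer G hsubE with hq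
    have hqE : q.edges = p.edges := p.edges_transfer hsubE
    apply hnoG a b q
    have hfa : IsFree M a := by
      intro g hgM hag
      by_cases hgeq : g = s(u, v)
      · subst hgeq
        rcases Sym2.mem_iff.mp hag with rfl | rfl
        · exact hau rfl
        · exact hav rfl
      · exact hp.2.2.1 g (Finset.mem_erase.mpr ⟨hgeq, hgM⟩) hag
    have hfb : IsFree M b := by
      intro g hgM hbg
      by_cases hgeq : g = s(u, v)
      · subst hgeq
        rcases Sym2.mem_iff.mp hbg with rfl | rfl
        · exact hbu rfl
        · exact hbv rfl
      · exact hp.2.2.2.1 g (Finset.mem_erase.mpr ⟨hgeq, hgM⟩) hbg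
    refine ⟨hp.1.transfer _, by rw [p.length_transfer]; exact hp.2.1, hfa, hfb, ?_⟩
    intro i h
    have h' : i < p.edges.length := by rw [← hqE]; exact h
    have hgeteq : q.edges.get ⟨i, h⟩ = p.edges.get ⟨i, h'⟩ := by
      simp only [List.get_eq_getElem]
      exact List.getElem_of_eq hqE _
    rw [hgeteq]
    have hmem := hmemE _ (List.get_mem _ ⟨i, h'⟩)
    rw [← hp.2.2.2.2 i h', Finset.mem_erase]
    exact ⟨fun hh => ⟨hmem.2, hh⟩, fun hh => hh.2⟩
  refine ⟨part1, ?_, ?_⟩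
  · intro hno
    refine ⟨hM'match, ?_⟩
    intro M'' hM''
    by_contra hgt
    push_neg at hgt
    obtain ⟨x, y, p, hp⟩ := AugAux.berge ((M.erase s(u, v)).card + 1)
      (G.deleteEdges {s(u, v)}) (M.erase s(u, v)) M'' (by omega) hM'match hM'' hgt
    exact hno ⟨x, y, p, hp⟩
  · intro a b p hp
    obtain ⟨hmatch, hcard⟩ := AugAux.augment hM'match hp
    refine ⟨hmatch, ?_⟩
    intro M'' hM''
    have hM''G : IsMatching G M'' := by
      refine ⟨fun g hg => ?_, hM''.2⟩
      have := hM''.1 g hg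
      rw [hES] at this
      exact this.1
    have := hM.2 _ hM''G
    omega
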